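/- arXiv:math/0309145 — 4 statements merged into one kernel-verified Lean document; each statement's English description precedes it below -/
import Mathlib

section
/- Let R → R' be a ring map with Spec R' → Spec R an open immersion of schemes. Then the (flat base change) functor D(R) → D(R') on derived categories admits a fully faithful right adjoint given by restriction of scalars; equivalently, for every complex N of R'-modules the canonical map N ⊗^L_R R' → N is a quasi-isomorphism. -/
open CategoryTheory AlgebraicGeometry TensorProduct

universe u v

namespace Stmt6Aux

variable {R R' : Type u} [CommRing R] [CommRing R'] (f : R →+* R')

lemma map_smul_of_epi (hepi : Epi (CommRingCat.ofHom f)) {M N : ModuleCat.{v} R'}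
    (g : (ModuleCat.restrictScalars f).obj M ⟶ (ModuleCat.restrictScalars f).obj N)
    (s : R') (m : M) : g (s • m) = s • g m := by
  letI : Algebra R R' := f.toAlgebra
  letI : Module R M := Module.compHom M f
  letI : Module R N := Module.compHom N f
  have htmul : ∀ s : R', (s ⊗ₜ[R] (1 : R') : TensorProduct R R' R') = (1 : R') ⊗ₜ[R] s :=
    fun s => ((Algebra.isEpi_iff_forall_one_tmul_eq R R').mp (CommRingCat.epi_iff_epi.mp hepi) s).symm
  let B : R' →ₗ[R] R' →ₗ[R] N :=
    { toFun := fun a =>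
      { toFun := fun b => a • g (b • m)
        map_add' := fun b b' => by
          show a • g ((b + b') • m) = a • g (b • m) + a • g (b' • m)
          rw [add_smul]; exact congrArg (a • ·) (g.hom.map_add (b • m) (b' • m)) |>.trans (smul_add _ _ _)
        map_smul' := fun r b => by
          show a • g ((f r * b) • m) = r • (a • g (b • m))
          rw [mul_smul]
          rw [show g ((f r : R') • (b • m)) = (f r : R') • g (b • m) from g.hom.map_smul r _]
          exact smul_comm a (f r) _ }
      map_add' := fun a a' => LinearMap.ext fun b => by
        show (a + a') • g (b • m) = a • g (b • m) + a' • g (b • m)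
        rw [add_smul]
      map_smul' := fun r a => LinearMap.ext fun b => by
        show (f r * a) • g (b • m) = r • (a • g (b • m))
        rw [mul_smul]
        rfl }
  have h2 : s • g ((1 : R') • m) = (1 : R') • g (s • m) :=
    congrArg (TensorProduct.lift B) (htmul s)
  rw [one_smul, one_smul] at h2
  exact h2.symm

lemma counit_iso (hepi : Epi (CommRingCat.ofHom f)) (M : ModuleCat.{u} R') :
    IsIso ((ModuleCat.extendRestrictScalarsAdj f).counit.app M) := by
  letI : Algebra R R' := f.toAlgebra
  letI : Module R M := Module.compHom M f
  have htmul : ∀ s : R', (s ⊗ₜ[R] (1 : R') : TensorProduct R R' R') = (1 : R') ⊗ₜ[R] s :=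
    fun s => ((Algebra.isEpi_iff_forall_one_tmul_eq R R').mp (CommRingCat.epi_iff_epi.mp hepi) s).symm
  have key : ∀ (s : R') (m : M),
      (s ⊗ₜ[R] m : TensorProduct R R' M) = (1 : R') ⊗ₜ[R] (s • m) := by
    intro s m
    let ψ : R' →ₗ[R] R' →ₗ[R] TensorProduct R R' M :=
      { toFun := fun a =>
        { toFun := fun b => a ⊗ₜ[R] (b • m)
          map_add' := fun b b' => by
            show a ⊗ₜ[R] ((b + b') • m) = a ⊗ₜ[R] (b • m) + a ⊗ₜ[R] (b' • m)
            rw [add_smul, tmul_add]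
          map_smul' := fun r b => by
            show a ⊗ₜ[R] ((f r * b) • m) = r • (a ⊗ₜ[R] (b • m))
            rw [mul_smul]
            exact tmul_smul r a (b • m) }
        map_add' := fun a a' => LinearMap.ext fun b => by
          show (a + a') ⊗ₜ[R] (b • m) = a ⊗ₜ[R] (b • m) + a' ⊗ₜ[R] (b • m)
          exact add_tmul a a' (b • m)
        map_smul' := fun r a => LinearMap.ext fun b => by
          show (r • a) ⊗ₜ[R] (b • m) = r • (a ⊗ₜ[R] (b • m))
          exact (smul_tmul' r a (b • m)).symm }
    have hk : s ⊗ₜ[R] ((1 : R') • m) = (1 : R') ⊗ₜ[R] (s • m) :=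
      congrArg (TensorProduct.lift ψ) (htmul s)
    rwa [one_smul] at hk
  let g : M ⟶ (ModuleCat.restrictScalars f ⋙ ModuleCat.extendScalars f).obj M :=
    ModuleCat.ofHom (X := M)
      (Y := (ModuleCat.restrictScalars f ⋙ ModuleCat.extendScalars f).obj M) <|
    { toFun := fun m => (1 : R') ⊗ₜ[R] m
      map_add' := fun m m' => tmul_add (1 : R') m m'
      map_smul' := fun s m => by
        refine ((key s m).symm).trans ?_
        show (s ⊗ₜ[R] m : TensorProduct R R' M) = ((s * 1) ⊗ₜ[R] m : TensorProduct R R' M)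
        rw [mul_one] }
  have hsect : ∀ x : ((ModuleCat.restrictScalars f ⋙ ModuleCat.extendScalars f).obj M),
      g ((ModuleCat.extendRestrictScalarsAdj f).counit.app M x) = x := by
    intro x
    induction x using TensorProduct.induction_on with
    | zero => exact (congrArg g.hom (map_zero _)).trans (map_zero _)
    | tmul s m =>
      have e1 : (ModuleCat.extendRestrictScalarsAdj f).counit.app M (s ⊗ₜ[R] m) = @HSMul.hSMul R' M M _ s m :=
        (congrArg ((ModuleCat.extendRestrictScalarsAdj f).counit.app M).hom (key s m)).trans
          (ModuleCat.extendRestrictScalarsAdj_counit_app_apply_one_tmul f M (@HSMul.hSMul R' M M _ s m))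
      exact (congrArg g.hom e1).trans (key s m).symm
    | add x y hx hy =>
      exact (congrArg g.hom (map_add _ x y)).trans ((map_add _ _ _).trans (congrArg₂ (· + ·) hx hy))
  exact ⟨g, ModuleCat.hom_ext (LinearMap.ext hsect), ModuleCat.hom_ext (LinearMap.ext fun m =>
    ModuleCat.extendRestrictScalarsAdj_counit_app_apply_one_tmul f M m)⟩

end Stmt6Aux

/-- If `Spec R' → Spec R` is an open immersion, then the base change functor
`D(R) → D(R')` admits a fully faithful right adjoint given by restriction of scalars;
equivalently, for every complex `N` of `R'`-modules the canonical (counit) map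
`N ⊗^L_R R' → N` is a quasi-isomorphism. -/
theorem stmt6 {R R' : Type u} [CommRing R] [CommRing R'] (f : R →+* R')
    (h : IsOpenImmersion (Spec.map (CommRingCat.ofHom f))) :
    (ModuleCat.restrictScalars f).Full ∧ (ModuleCat.restrictScalars f).Faithful ∧
    ∀ N : CochainComplex (ModuleCat.{u} R') ℤ,
      QuasiIso ((NatTrans.mapHomologicalComplex
        ((ModuleCat.extendRestrictScalarsAdj f).counit) (ComplexShape.up ℤ)).app N) := by
  have hmono : Mono (Scheme.Spec.map (CommRingCat.ofHom f).op) := h.mono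
  have hm2 : Mono (CommRingCat.ofHom f).op := Scheme.Spec.mono_of_mono_map hmono
  have hepi : Epi (CommRingCat.ofHom f) :=
    CategoryTheory.unop_epi_of_mono (CommRingCat.ofHom f).op
  refine ⟨⟨fun {M N} g => ?_⟩, inferInstance, fun N => ?_⟩
  · exact ⟨ModuleCat.ofHom (X := M) (Y := N) <|
           { toFun := g,
             map_add' := g.hom.map_add,
             map_smul' := fun s m => Stmt6Aux.map_smul_of_epi f hepi (M := M) (N := N) g s m },
           ModuleCat.hom_ext (LinearMap.ext fun x => rfl)⟩
  · haveI : ∀ i : ℤ, IsIso (((NatTrans.mapHomologicalComplex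
        ((ModuleCat.extendRestrictScalarsAdj f).counit) (ComplexShape.up ℤ)).app N).f i) :=
      fun i => Stmt6Aux.counit_iso f hepi (N.X i)
    haveI := HomologicalComplex.Hom.isIso_of_components ((NatTrans.mapHomologicalComplex
        ((ModuleCat.extendRestrictScalarsAdj f).counit) (ComplexShape.up ℤ)).app N)
    infer_instance
end

section
/- Let R → R' be a finitely presented ring homomorphism whose cotangent complex L_{R'/R} is acyclic. Then R → R' is étale (flat and unramified). -/
universe u

/-- A finitely presented ring map whose cotangent complex is acyclic
(vanishing of `Ω = H⁰(L)` and of `H¹(L)`) is étale. -/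
theorem stmt8 {R R' : Type u} [CommRing R] [CommRing R'] [Algebra R R']
    [Algebra.FinitePresentation R R']
    (h0 : Subsingleton (KaehlerDifferential R R'))
    (h1 : Subsingleton (Algebra.H1Cotangent R R')) :
    Algebra.Etale R R' := by
  have hproj : Module.Projective R' (KaehlerDifferential R R') := by
    have : Subsingleton ((KaehlerDifferential R R') →ₗ[R'] KaehlerDifferential R R') :=
      ⟨fun _ _ => LinearMap.ext fun x => Subsingleton.elim _ _⟩
    exact Module.Projective.of_split LinearMap.id LinearMap.id (Subsingleton.elim _ _)
  have hsm : Algebra.FormallySmooth R R' :=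
    ⟨hproj, h1⟩
  have hunr : Algebra.FormallyUnramified R R' :=
    ⟨h0⟩
  constructor
  · exact Algebra.FormallyEtale.iff_formallyUnramified_and_formallySmooth.mpr ⟨hunr, hsm⟩
  · infer_instance
end

section
/- Let {A → B_i}_{i∈I} be a family of maps of commutative rings such that {Spec π₀-level maps} form a faithfully flat covering and each B_i is flat over A. Then for any A-module M, the natural map M → equalizer( ∏_i M ⊗_A B_i ⇉ ∏_{i,j} M ⊗_A B_i ⊗_A B_j ) is an isomorphism. -/
open TensorProduct

universe u

section Aux

variable {A : Type u} [CommRing A] (C : Type u) [CommRing C] [Algebra A C]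
variable (M : Type u) [AddCommGroup M] [Module A M]

/-- The augmentation `m ↦ m ⊗ 1`. -/
noncomputable def auxD0 : M →ₗ[A] M ⊗[A] C := (TensorProduct.mk A M C).flip 1

@[simp] lemma auxD0_apply (m : M) : auxD0 C M m = m ⊗ₜ[A] (1 : C) := rfl

/-- The difference of the two coface maps. -/
noncomputable def auxDD : M ⊗[A] C →ₗ[A] M ⊗[A] (C ⊗[A] C) :=
  LinearMap.lTensor M ((Algebra.TensorProduct.includeLeft : C →ₐ[A] C ⊗[A] C).toLinearMap)
  - LinearMap.lTensor M ((Algebra.TensorProduct.includeRight : C →ₐ[A] C ⊗[A] C).toLinearMap)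

@[simp] lemma auxDD_tmul (m : M) (c : C) :
    auxDD C M (m ⊗ₜ[A] c) = m ⊗ₜ[A] (c ⊗ₜ[A] (1 : C)) - m ⊗ₜ[A] ((1 : C) ⊗ₜ[A] c) := by
  simp [auxDD]

/-- First homotopy map: `c ⊗ (m ⊗ c') ↦ (c * c') ⊗ m`. -/
noncomputable def auxS0 : C ⊗[A] (M ⊗[A] C) →ₗ[A] C ⊗[A] M :=
  LinearMap.rTensor M (LinearMap.mul' A C)
    ∘ₗ (TensorProduct.assoc A C C M).symm.toLinearMap
    ∘ₗ LinearMap.lTensor C (TensorProduct.comm A M C).toLinearMap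

@[simp] lemma auxS0_tmul (c : C) (m : M) (c' : C) :
    auxS0 C M (c ⊗ₜ[A] (m ⊗ₜ[A] c')) = (c * c') ⊗ₜ[A] m := by
  simp [auxS0]

/-- Second homotopy map: `c ⊗ (m ⊗ (c₁ ⊗ c₂)) ↦ (c * c₁) ⊗ (m ⊗ c₂)`. -/
noncomputable def auxS1 : C ⊗[A] (M ⊗[A] (C ⊗[A] C)) →ₗ[A] C ⊗[A] (M ⊗[A] C) :=
  LinearMap.rTensor (M ⊗[A] C) (LinearMap.mul' A C)
    ∘ₗ (TensorProduct.assoc A C C (M ⊗[A] C)).symm.toLinearMap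
    ∘ₗ LinearMap.lTensor C
      ((TensorProduct.comm A (M ⊗[A] C) C).toLinearMap
        ∘ₗ (TensorProduct.assoc A M C C).symm.toLinearMap
        ∘ₗ LinearMap.lTensor M (TensorProduct.comm A C C).toLinearMap)

@[simp] lemma auxS1_tmul (c : C) (m : M) (c₁ c₂ : C) :
    auxS1 C M (c ⊗ₜ[A] (m ⊗ₜ[A] (c₁ ⊗ₜ[A] c₂))) = (c * c₁) ⊗ₜ[A] (m ⊗ₜ[A] c₂) := by
  simp [auxS1]

lemma auxS0_lTensor_auxD0 (z : C ⊗[A] M) :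
    auxS0 C M (LinearMap.lTensor C (auxD0 C M) z) = z := by
  induction z with
  | zero => simp
  | tmul c m => simp
  | add x y hx hy => simp [hx, hy]

lemma auxS1_lTensor_auxDD (z : C ⊗[A] (M ⊗[A] C)) :
    auxS1 C M (LinearMap.lTensor C (auxDD C M) z)
      = LinearMap.lTensor C (auxD0 C M) (auxS0 C M z) - z := by
  induction z with
  | zero => simp
  | tmul c w =>
    induction w with
    | zero => simp
    | tmul m c' => simp [tmul_sub, mul_one]
    | add x y hx hy =>
      rw [tmul_add, map_add, map_add, map_add, map_add, hx, hy]
      abel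
  | add x y hx hy =>
    rw [map_add, map_add, map_add, map_add, hx, hy]
    abel

lemma auxDD_comp_auxD0 : (auxDD (A := A) C M) ∘ₗ (auxD0 (A := A) C M) = 0 := by
  ext m
  simp

/-- Amitsur exactness in degree ≤ 1 for a faithfully flat algebra. -/
lemma aux_exact [Module.FaithfullyFlat A C] :
    Function.Injective (auxD0 (A := A) C M) ∧ Function.Exact (auxD0 (A := A) C M) (auxDD (A := A) C M) := by
  have hinj' : Function.Injective (LinearMap.lTensor C (auxD0 (A := A) C M)) := by
    intro x y h
    have := congrArg (auxS0 C M) h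
    rwa [auxS0_lTensor_auxD0, auxS0_lTensor_auxD0] at this
  have hex' : Function.Exact (LinearMap.lTensor C (auxD0 (A := A) C M))
      (LinearMap.lTensor C (auxDD (A := A) C M)) := by
    intro y
    constructor
    · intro hy
      refine ⟨auxS0 C M y, ?_⟩
      have := auxS1_lTensor_auxDD C M y
      rw [hy] at this
      simp only [map_zero] at this
      exact sub_eq_zero.mp this.symm
    · rintro ⟨x, rfl⟩
      rw [← LinearMap.comp_apply, ← LinearMap.lTensor_comp, auxDD_comp_auxD0]
      simp
  constructor
  · -- reflect injectivity using exactness of `0 → ⬝`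
    have h0 : Function.Exact (LinearMap.lTensor C (0 : M →ₗ[A] M))
        (LinearMap.lTensor C (auxD0 (A := A) C M)) := by
      intro y
      constructor
      · intro hy
        refine ⟨0, ?_⟩
        have : y = 0 := by
          apply hinj'
          simpa using hy
        simp [this]
      · rintro ⟨x, rfl⟩
        simp only [LinearMap.lTensor_zero, LinearMap.zero_apply, map_zero]
    have := Module.FaithfullyFlat.lTensor_reflects_exact A C
      (0 : M →ₗ[A] M) (auxD0 C M) h0
    intro x y hxy
    have hx : auxD0 (A := A) C M (x - y) = 0 := by
      rw [map_sub, hxy, sub_self]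
    obtain ⟨z, hz⟩ := (this (x - y)).1 hx
    have : x - y = 0 := by rw [← hz]; simp
    exact sub_eq_zero.mp this
  · exact Module.FaithfullyFlat.lTensor_reflects_exact A C _ _ hex'

end Aux

section Pi

variable {A : Type u} [CommRing A] {I : Type u} [Fintype I] [DecidableEq I]
variable (B : I → Type u) [∀ i, CommRing (B i)] [∀ i, Algebra A (B i)]
variable (M : Type u) [AddCommGroup M] [Module A M]

lemma piRight_proj (y : M ⊗[A] (∀ i, B i)) (i : I) :
    TensorProduct.piRight A A M B y i
      = LinearMap.lTensor M (LinearMap.proj i) y := by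
  induction y with
  | zero => simp
  | tmul m b => simp
  | add x y hx hy => rw [map_add, map_add, Pi.add_apply, hx, hy]

end Pi

/-- descent of modules along a finite flat covering: if each `B i` is a flat
`A`-algebra and the family covers `Spec A`, then for any `A`-module `M` the natural map from
`M` to the equalizer of `∏ i, M ⊗_A B i ⇉ ∏ i j, M ⊗_A (B i ⊗_A B j)` is an isomorphism. -/
theorem stmt13 {A : Type u} [CommRing A] {I : Type u} [Fintype I]
    (B : I → Type u) [∀ i, CommRing (B i)] [∀ i, Algebra A (B i)]
    [∀ i, Module.Flat A (B i)]
    (hcover : ∀ (p : Ideal A), p.IsPrime → ∃ (i : I) (q : Ideal (B i)),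
      q.IsPrime ∧ q.comap (algebraMap A (B i)) = p)
    (M : Type u) [AddCommGroup M] [Module A M] :
    Function.Injective (fun (m : M) (i : I) => (m ⊗ₜ[A] (1 : B i) : M ⊗[A] B i)) ∧
    (∀ x : ∀ i : I, M ⊗[A] B i,
      (∀ i j : I,
        (LinearMap.lTensor M
          ((Algebra.TensorProduct.includeLeft :
            B i →ₐ[A] (B i ⊗[A] B j)).toLinearMap)) (x i) =
        (LinearMap.lTensor M
          ((Algebra.TensorProduct.includeRight :
            B j →ₐ[A] (B i ⊗[A] B j)).toLinearMap)) (x j)) ↔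
      ∃ m : M, ∀ i : I, x i = m ⊗ₜ[A] (1 : B i)) := by
  classical
  -- `∀ i, B i` is flat over `A`
  haveI hflat : Module.Flat A (∀ i, B i) :=
    Module.Flat.of_linearEquiv (M := DirectSum I (fun i => B i))
      (DirectSum.linearEquivFunOnFintype A I B).symm
  -- `∀ i, B i` is faithfully flat over `A`
  haveI hff : Module.FaithfullyFlat A (∀ i, B i) := by
    rw [Module.FaithfullyFlat.iff_flat_and_proper_ideal]
    refine ⟨hflat, fun J hJ hJtop => ?_⟩
    obtain ⟨p, hp, hJp⟩ := J.exists_le_maximal hJ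
    obtain ⟨i, q, hq, hqp⟩ := hcover p hp.isPrime
    -- project the equality `J • ⊤ = ⊤` to `B i`
    have hsurj : Function.Surjective (LinearMap.proj i : (∀ i, B i) →ₗ[A] B i) := by
      intro b
      exact ⟨Pi.single i b, by simp⟩
    have htop : J • (⊤ : Submodule A (B i)) = ⊤ := by
      have := congrArg (Submodule.map (LinearMap.proj i : (∀ i, B i) →ₗ[A] B i)) hJtop
      rwa [Submodule.map_smul'', Submodule.map_top, LinearMap.range_eq_top.2 hsurj] at this
    rw [Ideal.smul_top_eq_map] at htop
    have hmap : J.map (algebraMap A (B i)) = ⊤ := by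
      rw [eq_top_iff]
      intro b _
      have : b ∈ (J.map (algebraMap A (B i))).restrictScalars A := by
        rw [htop]; trivial
      exact this
    have hle : J.map (algebraMap A (B i)) ≤ q := by
      refine Ideal.map_le_iff_le_comap.2 ?_
      exact hJp.trans (le_of_eq hqp.symm)
    rw [hmap] at hle
    exact hq.ne_top (top_le_iff.1 hle)
  obtain ⟨hinj, hex⟩ := aux_exact (A := A) (∀ i, B i) M
  -- the comparison isomorphism `M ⊗ (∀ i, B i) ≃ ∀ i, M ⊗ B i`
  have hφd0 : ∀ m : M, ∀ i : I,
      TensorProduct.piRight A A M B (auxD0 (A := A) (∀ i, B i) M m) i = m ⊗ₜ[A] (1 : B i) := by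
    intro m i
    rw [auxD0_apply, TensorProduct.piRight_apply, TensorProduct.piRightHom_tmul]
    simp
  constructor
  · -- injectivity
    intro m m' h
    apply hinj
    apply (TensorProduct.piRight A A M B).injective
    funext i
    rw [hφd0, hφd0]
    exact congrFun h i
  · intro x
    constructor
    · intro hx
      set y : M ⊗[A] (∀ i, B i) := (TensorProduct.piRight A A M B).symm x with hy
      have hyi : ∀ i, LinearMap.lTensor M (LinearMap.proj i : (∀ i, B i) →ₗ[A] B i) y = x i := by
        intro i
        rw [← piRight_proj]
        rw [hy, LinearEquiv.apply_symm_apply]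
      -- the injection `M ⊗ ((∀ i, B i) ⊗ (∀ i, B i)) ↪ ∀ i j, M ⊗ (B i ⊗ B j)`
      have hDDy : auxDD (A := A) (∀ i, B i) M y = 0 := by
        -- build the injective comparison map
        let e : ((∀ i, B i) ⊗[A] (∀ i, B i)) ≃ₗ[A] ∀ i, (B i) ⊗[A] (∀ j, B j) :=
          (TensorProduct.comm A (∀ i, B i) (∀ i, B i)).trans
            ((TensorProduct.piRight A A (∀ i, B i) B).trans
              (LinearEquiv.piCongrRight (fun i => TensorProduct.comm A (∀ j, B j) (B i))))
        let e2 : (∀ i, (B i) ⊗[A] (∀ j, B j)) ≃ₗ[A] ∀ i, ∀ j, (B i) ⊗[A] (B j) :=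
          LinearEquiv.piCongrRight (fun i => TensorProduct.piRight A A (B i) B)
        let Ψ : M ⊗[A] ((∀ i, B i) ⊗[A] (∀ i, B i)) ≃ₗ[A] ∀ i, ∀ j, M ⊗[A] ((B i) ⊗[A] (B j)) :=
          (LinearEquiv.lTensor M (e.trans e2)).trans
            ((TensorProduct.piRight A A M _).trans
              (LinearEquiv.piCongrRight (fun i => TensorProduct.piRight A A M _)))
        have hΨ : ∀ (z : M ⊗[A] ((∀ i, B i) ⊗[A] (∀ i, B i))) (i j : I),
            Ψ z i j = LinearMap.lTensor M
              (TensorProduct.map (LinearMap.proj i) (LinearMap.proj j)) z := by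
          intro z i j
          induction z with
          | zero => simp
          | tmul m t =>
            induction t with
            | zero => simp
            | tmul c c' => simp [Ψ, e, e2]
            | add s t hs ht =>
              rw [tmul_add, map_add, map_add]
              simp only [Pi.add_apply] at *
              rw [hs, ht]
          | add s t hs ht =>
            rw [map_add, map_add]
            simp only [Pi.add_apply] at *
            rw [hs, ht]
        apply Ψ.injective
        rw [map_zero]
        funext i j
        rw [hΨ]
        have hcompL : (TensorProduct.map (LinearMap.proj i : (∀ i, B i) →ₗ[A] B i)
            (LinearMap.proj j : (∀ i, B i) →ₗ[A] B j)).comp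
              ((Algebra.TensorProduct.includeLeft :
                (∀ i, B i) →ₐ[A] (∀ i, B i) ⊗[A] (∀ i, B i)).toLinearMap)
            = ((Algebra.TensorProduct.includeLeft :
                B i →ₐ[A] (B i ⊗[A] B j)).toLinearMap).comp
              (LinearMap.proj i : (∀ i, B i) →ₗ[A] B i) := by
          ext c
          simp
        have hcompR : (TensorProduct.map (LinearMap.proj i : (∀ i, B i) →ₗ[A] B i)
            (LinearMap.proj j : (∀ i, B i) →ₗ[A] B j)).comp
              ((Algebra.TensorProduct.includeRight :
                (∀ i, B i) →ₐ[A] (∀ i, B i) ⊗[A] (∀ i, B i)).toLinearMap)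
            = ((Algebra.TensorProduct.includeRight :
                B j →ₐ[A] (B i ⊗[A] B j)).toLinearMap).comp
              (LinearMap.proj j : (∀ i, B i) →ₗ[A] B j) := by
          ext c
          simp
        have h1 : LinearMap.lTensor M
            (TensorProduct.map (LinearMap.proj i : (∀ i, B i) →ₗ[A] B i)
              (LinearMap.proj j : (∀ i, B i) →ₗ[A] B j))
            (LinearMap.lTensor M ((Algebra.TensorProduct.includeLeft :
              (∀ i, B i) →ₐ[A] ((∀ i, B i) ⊗[A] (∀ i, B i))).toLinearMap) y)
            = LinearMap.lTensor M ((Algebra.TensorProduct.includeLeft :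
                B i →ₐ[A] (B i ⊗[A] B j)).toLinearMap) (x i) := by
          have h := LinearMap.congr_fun
            (congrArg (fun f => LinearMap.lTensor M f) hcompL) y
          simp only [LinearMap.lTensor_comp, LinearMap.comp_apply] at h
          rw [hyi] at h
          exact h
        have h2 : LinearMap.lTensor M
            (TensorProduct.map (LinearMap.proj i : (∀ i, B i) →ₗ[A] B i)
              (LinearMap.proj j : (∀ i, B i) →ₗ[A] B j))
            (LinearMap.lTensor M ((Algebra.TensorProduct.includeRight :
              (∀ i, B i) →ₐ[A] ((∀ i, B i) ⊗[A] (∀ i, B i))).toLinearMap) y)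
            = LinearMap.lTensor M ((Algebra.TensorProduct.includeRight :
                B j →ₐ[A] (B i ⊗[A] B j)).toLinearMap) (x j) := by
          have h := LinearMap.congr_fun
            (congrArg (fun f => LinearMap.lTensor M f) hcompR) y
          simp only [LinearMap.lTensor_comp, LinearMap.comp_apply] at h
          rw [hyi] at h
          exact h
        have hdd : auxDD (A := A) (∀ i, B i) M y
            = LinearMap.lTensor M ((Algebra.TensorProduct.includeLeft :
                (∀ i, B i) →ₐ[A] ((∀ i, B i) ⊗[A] (∀ i, B i))).toLinearMap) y
              - LinearMap.lTensor M ((Algebra.TensorProduct.includeRight :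
                (∀ i, B i) →ₐ[A] ((∀ i, B i) ⊗[A] (∀ i, B i))).toLinearMap) y := rfl
        rw [hdd, map_sub, h1, h2, hx i j, sub_self]
        simp
      obtain ⟨m, hm⟩ := (hex y).1 hDDy
      refine ⟨m, fun i => ?_⟩
      have hyx : TensorProduct.piRight A A M B y = x := by
        rw [hy, LinearEquiv.apply_symm_apply]
      rw [← hyx, ← hm, hφd0]
    · rintro ⟨m, hm⟩ i j
      rw [hm i, hm j]
      simp
end

section
/- Let f : A → B be a ring map and suppose the induced functor on commutative algebra categories, restriction along f from B-algebras to A-algebras, is fully faithful. Then for every B-module M, every A-algebra derivation from B into the trivial square-zero extension B ⊕ M over B is trivial; i.e. Der_A(B, M) = 0, and hence Ω_{B/A} = 0. -/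
open CategoryTheory

universe u

section Aux

variable {A B : Type u} [CommRing A] [CommRing B] [Algebra A B]
variable (M : Type u) [AddCommGroup M] [Module A M] [Module B M] [IsScalarTower A B M]

private theorem stmt17_aux (hfull : (Under.map (CommRingCat.ofHom (algebraMap A B))).Full)
    (d : Derivation A B M) : d = 0 := by
  letI : Module Bᵐᵒᵖ M := Module.compHom M ((RingHom.id B).fromOpposite mul_comm)
  haveI : IsCentralScalar B M := ⟨fun r m => rfl⟩
  -- the trivial square-zero extension
  let ι : B →+* TrivSqZeroExt B M := TrivSqZeroExt.inlHom B M
  -- the ring hom `b ↦ (b, d b)`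
  let σ : B →+* TrivSqZeroExt B M :=
  { toFun := fun b => TrivSqZeroExt.inl b + TrivSqZeroExt.inr (d b)
    map_one' := by simp
    map_mul' := fun x y => by
      refine TrivSqZeroExt.ext ?_ ?_
      · simp [TrivSqZeroExt.fst_mul]
      · simp [TrivSqZeroExt.snd_mul, d.leibniz]
    map_zero' := by simp
    map_add' := fun x y => by
      refine TrivSqZeroExt.ext ?_ ?_ <;> simp <;> abel }
  -- both agree after restriction to `A`
  have hA : ∀ a : A, σ (algebraMap A B a) = ι (algebraMap A B a) := by
    intro a
    show TrivSqZeroExt.inl (algebraMap A B a) + TrivSqZeroExt.inr (d (algebraMap A B a)) = _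
    rw [d.map_algebraMap, TrivSqZeroExt.inr_zero, add_zero]
    rfl
  -- set up the under categories
  let F := Under.map (CommRingCat.ofHom (algebraMap A B))
  let X : Under (CommRingCat.of B) := Under.mk (𝟙 (CommRingCat.of B))
  let Y : Under (CommRingCat.of B) := Under.mk (CommRingCat.ofHom ι)
  let g : F.obj X ⟶ F.obj Y :=
    Under.homMk (CommRingCat.ofHom σ) (by
      ext a
      exact hA a)
  obtain ⟨h, hh⟩ := hfull.map_surjective g
  have h1 : h.right = CommRingCat.ofHom σ := by
    exact congrArg CommaMorphism.right hh
  have h2 : X.hom ≫ h.right = Y.hom := Under.w h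
  have h3 : h.right = CommRingCat.ofHom ι := by simpa [X, Y] using h2
  have hσι : CommRingCat.ofHom σ = CommRingCat.ofHom ι := h1 ▸ h3
  -- conclude `d = 0`
  ext b
  have := congrArg (fun (f : CommRingCat.of B ⟶ CommRingCat.of (TrivSqZeroExt B M)) => (f b).snd) hσι
  simpa [σ, ι, TrivSqZeroExt.snd_inl, TrivSqZeroExt.snd_inr] using this

end Aux

/-- If restriction along `f : A → B` from (commutative) `B`-algebras to
`A`-algebras (the functor between under-categories) is fully faithful, then every `A`-linear
derivation of `B` into any `B`-module `M` (equivalently, every `A`-algebra section of the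
trivial square-zero extension `B ⊕ M → B`) vanishes; hence `Ω_{B/A} = 0`. -/
theorem stmt17 {A B : Type u} [CommRing A] [CommRing B] [Algebra A B]
    (hfull : (Under.map (CommRingCat.ofHom (algebraMap A B))).Full)
    (hfaithful : (Under.map (CommRingCat.ofHom (algebraMap A B))).Faithful) :
    (∀ (M : Type u) [AddCommGroup M] [Module A M] [Module B M] [IsScalarTower A B M]
      (d : Derivation A B M), d = 0) ∧
    Subsingleton (KaehlerDifferential A B) := by
  have key : ∀ (M : Type u) [AddCommGroup M] [Module A M] [Module B M] [IsScalarTower A B M]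
      (d : Derivation A B M), d = 0 := fun M _ _ _ _ d => stmt17_aux M hfull d
  refine ⟨key, ?_⟩
  have hD : KaehlerDifferential.D A B = 0 := key _ _
  have hspan := KaehlerDifferential.span_range_derivation A B
  rw [hD] at hspan
  have hbot : (⊤ : Submodule B (KaehlerDifferential A B)) = ⊥ := by
    rw [← hspan]
    simp
  constructor
  intro x y
  have hx : x ∈ (⊥ : Submodule B (KaehlerDifferential A B)) := hbot ▸ Submodule.mem_top
  have hy : y ∈ (⊥ : Submodule B (KaehlerDifferential A B)) := hbot ▸ Submodule.mem_top
  rw [Submodule.mem_bot] at hx hy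
  rw [hx, hy]
end
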